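/- Let X be a real random variable with E X ∈ (0,∞] (the mean may be infinite), P(X < 0) > 0, and g(θ₀) < ∞ for some θ₀ > 0, where g(θ) = E[e^{-θX}]. Then κ = sup{θ > 0 : g(θ) < 1} satisfies 0 < κ < ∞, and ρ = g(κ) satisfies 0 < ρ ≤ 1. Moreover, if g(θ) < ∞ for all θ > 0, then ρ = 1. -/

import Mathlib

open MeasureTheory Filter Set
open scoped ENNReal

noncomputable section


private lemma aux_exp_neg_le (t : ℝ) : Real.exp (-t) ≤ 1 - t + t ^ 2 * Real.exp |t| := by
  have hexp1 : (1:ℝ) ≤ Real.exp |t| := Real.one_le_exp (abs_nonneg t)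
  have hsq : (0:ℝ) ≤ t ^ 2 := sq_nonneg t
  rcases le_or_gt (|t|) 1 with h | h
  · have h2 : |Real.exp (-t) - 1 - (-t)| ≤ (-t) ^ 2 :=
      Real.abs_exp_sub_one_sub_id_le (by rwa [abs_neg])
    have h3 := (abs_le.mp h2).2
    nlinarith
  · rcases le_or_gt t 0 with ht | ht
    · have habs : |t| = -t := abs_of_nonpos ht
      have h1 : (1:ℝ) < -t := by rw [habs] at h; linarith
      have hp := Real.exp_pos (-t)
      rw [habs]
      nlinarith [mul_pos hp (show (0:ℝ) < -t - 1 by linarith)]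
    · have habs : |t| = t := abs_of_pos ht
      have h1 : (1:ℝ) < t := by rwa [habs] at h
      have h2 : Real.exp (-t) ≤ 1 := Real.exp_le_one_iff.mpr (by linarith)
      have h4 : (1:ℝ) ≤ Real.exp t := Real.one_le_exp (by linarith)
      rw [habs]
      nlinarith [mul_le_mul_of_nonneg_left h4 hsq]

private lemma aux_sq_le_exp {x : ℝ} (hx : 0 ≤ x) : x ^ 2 ≤ 4 * Real.exp x := by
  have h1 := Real.add_one_le_exp (x / 2)
  have h2 : Real.exp x = Real.exp (x / 2) * Real.exp (x / 2) := by
    rw [← Real.exp_add]; ring_nf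
  nlinarith [Real.exp_pos (x / 2)]

-- key pointwise real inequality
private lemma aux_key {θ₀ θ y : ℝ} (hθ₀ : 0 < θ₀) (hθ : 0 < θ) (hθ2 : θ ≤ θ₀ / 2) :
    Real.exp (-(θ * y)) ≤ 1 - θ * y + θ ^ 2 * (16 / θ₀ ^ 2) * Real.exp (θ₀ * |y|) := by
  have h1 := aux_exp_neg_le (θ * y)
  have habs : |θ * y| = θ * |y| := by rw [abs_mul, abs_of_pos hθ]
  rw [habs] at h1
  have h2 : (θ₀ * |y| / 2) ^ 2 ≤ 4 * Real.exp (θ₀ * |y| / 2) := aux_sq_le_exp (by positivity)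
  -- y ^ 2 ≤ 16 / θ₀ ^ 2 * exp (θ₀ |y| / 2)
  have h3 : y ^ 2 ≤ 16 / θ₀ ^ 2 * Real.exp (θ₀ * |y| / 2) := by
    have h4 : θ₀ ^ 2 * y ^ 2 / 4 ≤ 4 * Real.exp (θ₀ * |y| / 2) := by
      have he : (θ₀ * |y| / 2) ^ 2 = θ₀ ^ 2 * y ^ 2 / 4 := by
        rw [div_pow, mul_pow, sq_abs]; ring
      rw [← he]; exact h2
    rw [div_mul_eq_mul_div, le_div_iff₀ (by positivity)]
    nlinarith
  have h5 : Real.exp (θ * |y|) ≤ Real.exp (θ₀ * |y| / 2) := by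
    apply Real.exp_le_exp.mpr
    have := abs_nonneg y
    nlinarith
  have h6 : Real.exp (θ₀ * |y| / 2) * Real.exp (θ₀ * |y| / 2) = Real.exp (θ₀ * |y|) := by
    rw [← Real.exp_add]; ring_nf
  have hep := Real.exp_pos (θ * |y|)
  have hep2 := Real.exp_pos (θ₀ * |y| / 2)
  calc Real.exp (-(θ * y)) ≤ 1 - θ * y + (θ * y) ^ 2 * Real.exp (θ * |y|) := h1
    _ ≤ 1 - θ * y + θ ^ 2 * (16 / θ₀ ^ 2) * Real.exp (θ₀ * |y|) := by
        have : (θ * y) ^ 2 * Real.exp (θ * |y|) ≤ θ ^ 2 * (16 / θ₀ ^ 2) * Real.exp (θ₀ * |y|) := by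
          rw [← h6, mul_pow]
          calc θ ^ 2 * y ^ 2 * Real.exp (θ * |y|)
              ≤ θ ^ 2 * (16 / θ₀ ^ 2 * Real.exp (θ₀ * |y| / 2)) * Real.exp (θ₀ * |y| / 2) := by
                apply mul_le_mul _ h5 (le_of_lt hep) (by positivity)
                exact mul_le_mul_of_nonneg_left h3 (by positivity)
          _ = θ ^ 2 * (16 / θ₀ ^ 2) * (Real.exp (θ₀ * |y| / 2) * Real.exp (θ₀ * |y| / 2)) := by ring
        linarith


private lemma aux_ofReal_max (a : ℝ) : ENNReal.ofReal (max a 0) = ENNReal.ofReal a := by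
  rcases le_total a 0 with h | h
  · simp [max_eq_right h, ENNReal.ofReal_of_nonpos h]
  · simp [max_eq_left h]

private lemma aux_max_decomp (y : ℝ) : max y 0 = y + max (-y) 0 := by
  rcases le_total y 0 with h | h
  · rw [max_eq_right h, max_eq_left (by linarith)]; ring
  · rw [max_eq_left h, max_eq_right (by linarith)]; ring

private lemma aux_nonempty {Ω : Type*} [MeasurableSpace Ω] (P : Measure Ω)
    [IsProbabilityMeasure P] (X : Ω → ℝ) (hX : Measurable X)
    (hneg : ∫⁻ ω, ENNReal.ofReal (-X ω) ∂P < ⊤)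
    (hmean : ∫⁻ ω, ENNReal.ofReal (-X ω) ∂P < ∫⁻ ω, ENNReal.ofReal (X ω) ∂P)
    {θ₀ : ℝ} (hθ₀ : 0 < θ₀)
    (hfin : ∫⁻ ω, ENNReal.ofReal (Real.exp (-θ₀ * X ω)) ∂P < ⊤) :
    ∃ θ, 0 < θ ∧ ∫⁻ ω, ENNReal.ofReal (Real.exp (-θ * X ω)) ∂P < 1 := by
  -- Monotone convergence to find a truncation level M
  have hMCT : ∫⁻ ω, ENNReal.ofReal (X ω) ∂P
      = ⨆ n : ℕ, ∫⁻ ω, ENNReal.ofReal (min (X ω) n) ∂P := by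
    rw [← lintegral_iSup (fun n => (hX.min measurable_const).ennreal_ofReal)]
    · congr 1; funext ω
      apply le_antisymm
      · obtain ⟨n, hn⟩ := exists_nat_ge (X ω)
        calc ENNReal.ofReal (X ω) = ENNReal.ofReal (min (X ω) n) := by
              rw [min_eq_left hn]
          _ ≤ ⨆ n : ℕ, ENNReal.ofReal (min (X ω) n) :=
              le_iSup (fun n : ℕ => ENNReal.ofReal (min (X ω) n)) n
      · exact iSup_le fun n => ENNReal.ofReal_le_ofReal (min_le_left _ _)
    · intro i j hij ω
      exact ENNReal.ofReal_le_ofReal (min_le_min le_rfl (by exact_mod_cast hij))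
  rw [hMCT, lt_iSup_iff] at hmean
  obtain ⟨M, hM⟩ := hmean
  set Y : Ω → ℝ := fun ω => min (X ω) M with hYdef
  have hYmeas : Measurable Y := hX.min measurable_const
  set A : ℝ≥0∞ := ∫⁻ ω, ENNReal.ofReal (Y ω) ∂P with hAdef
  set B : ℝ≥0∞ := ∫⁻ ω, ENNReal.ofReal (-X ω) ∂P with hBdef
  have hBA : B < A := hM
  have hBfin : B ≠ ⊤ := hneg.ne
  have hAfin : A ≠ ⊤ := by
    have h1 : A ≤ ENNReal.ofReal (M : ℝ) := by
      calc A ≤ ∫⁻ _ω, ENNReal.ofReal (M : ℝ) ∂P :=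
            lintegral_mono fun ω => ENNReal.ofReal_le_ofReal (min_le_right _ _)
        _ = ENNReal.ofReal (M : ℝ) := by simp
    exact (h1.trans_lt ENNReal.ofReal_lt_top).ne
  set E : ℝ≥0∞ := ∫⁻ ω, ENNReal.ofReal (Real.exp (θ₀ * |Y ω|)) ∂P with hEdef
  have hEmeas : Measurable fun ω => ENNReal.ofReal (Real.exp (θ₀ * |Y ω|)) :=
    ((hYmeas.abs.const_mul θ₀).exp).ennreal_ofReal
  have hEfin : E ≠ ⊤ := by
    have hpt : ∀ ω, ENNReal.ofReal (Real.exp (θ₀ * |Y ω|))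
        ≤ ENNReal.ofReal (Real.exp (θ₀ * M)) + ENNReal.ofReal (Real.exp (-θ₀ * X ω)) := by
      intro ω
      rcases le_or_gt 0 (Y ω) with h | h
      · have h1 : |Y ω| ≤ (M : ℝ) := by
          rw [abs_of_nonneg h]; exact min_le_right _ _
        calc ENNReal.ofReal (Real.exp (θ₀ * |Y ω|))
            ≤ ENNReal.ofReal (Real.exp (θ₀ * M)) := by
              apply ENNReal.ofReal_le_ofReal
              exact Real.exp_le_exp.mpr (mul_le_mul_of_nonneg_left h1 hθ₀.le)
          _ ≤ _ := le_self_add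
      · have hXω : X ω < 0 := by
          by_contra hc
          push_neg at hc
          exact absurd (le_min hc (by positivity)) (not_le.mpr h)
        have hY : Y ω = X ω := min_eq_left (hXω.le.trans (by positivity))
        have h1 : θ₀ * |Y ω| = -θ₀ * X ω := by
          rw [hY, abs_of_neg hXω]; ring
        rw [h1]
        exact le_add_self
    have h2 : E ≤ ENNReal.ofReal (Real.exp (θ₀ * M))
        + ∫⁻ ω, ENNReal.ofReal (Real.exp (-θ₀ * X ω)) ∂P := by
      calc E ≤ ∫⁻ ω, (ENNReal.ofReal (Real.exp (θ₀ * M))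
            + ENNReal.ofReal (Real.exp (-θ₀ * X ω))) ∂P := lintegral_mono hpt
        _ = _ := by
            rw [lintegral_add_left measurable_const, lintegral_const]
            simp
    exact (h2.trans_lt (ENNReal.add_lt_top.mpr ⟨ENNReal.ofReal_lt_top, hfin⟩)).ne
  -- choose θ
  set C : ℝ := 16 / θ₀ ^ 2 with hCdef
  have hC : 0 < C := by positivity
  set dr : ℝ := A.toReal - B.toReal with hdrdef
  have hdr : 0 < dr := by
    have := (ENNReal.toReal_lt_toReal hBfin hAfin).mpr hBA
    simp only [hdrdef]; linarith
  set Et : ℝ := E.toReal with hEtdef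
  have hEt : 0 ≤ Et := ENNReal.toReal_nonneg
  set θ : ℝ := min (θ₀ / 2) (dr / (2 * C * (Et + 1))) with hθdef
  have hθpos : 0 < θ := lt_min (by linarith) (by positivity)
  have hθle : θ ≤ θ₀ / 2 := min_le_left _ _
  have hθsmall : θ * C * Et < dr := by
    have h1 : θ ≤ dr / (2 * C * (Et + 1)) := min_le_right _ _
    have h2 : θ * (2 * C * (Et + 1)) ≤ dr := (le_div_iff₀ (by positivity)).mp h1
    nlinarith [mul_pos hθpos hC]
  refine ⟨θ, hθpos, ?_⟩
  -- pointwise master inequality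
  have hmaster : ∀ ω, ENNReal.ofReal (Real.exp (-θ * X ω)) + ENNReal.ofReal θ * ENNReal.ofReal (Y ω)
      ≤ 1 + ENNReal.ofReal θ * ENNReal.ofReal (-X ω)
        + ENNReal.ofReal (θ ^ 2 * C) * ENNReal.ofReal (Real.exp (θ₀ * |Y ω|)) := by
    intro ω
    set y : ℝ := Y ω with hy
    have hyX : y ≤ X ω := min_le_left _ _
    have step1 : ENNReal.ofReal (Real.exp (-θ * X ω)) ≤ ENNReal.ofReal (Real.exp (-(θ * y))) := by
      apply ENNReal.ofReal_le_ofReal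
      apply Real.exp_le_exp.mpr
      nlinarith [mul_le_mul_of_nonneg_left hyX hθpos.le]
    have hreal : Real.exp (-(θ * y)) + θ * max y 0
        ≤ 1 + θ * max (-y) 0 + θ ^ 2 * C * Real.exp (θ₀ * |y|) := by
      have h1 := aux_key (y := y) hθ₀ hθpos hθle
      have h3 : θ * max y 0 = θ * y + θ * max (-y) 0 := by
        rw [aux_max_decomp y]; ring
      rw [hCdef]
      linarith [h1, h3]
    calc ENNReal.ofReal (Real.exp (-θ * X ω)) + ENNReal.ofReal θ * ENNReal.ofReal (Y ω)
        ≤ ENNReal.ofReal (Real.exp (-(θ * y))) + ENNReal.ofReal (θ * max y 0) := by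
          apply add_le_add step1
          rw [← ENNReal.ofReal_mul hθpos.le]
          exact ENNReal.ofReal_le_ofReal (mul_le_mul_of_nonneg_left (le_max_left _ _) hθpos.le)
      _ = ENNReal.ofReal (Real.exp (-(θ * y)) + θ * max y 0) := by
          rw [ENNReal.ofReal_add (Real.exp_pos _).le (by positivity)]
      _ ≤ ENNReal.ofReal (1 + θ * max (-y) 0 + θ ^ 2 * C * Real.exp (θ₀ * |y|)) :=
          ENNReal.ofReal_le_ofReal hreal
      _ ≤ 1 + ENNReal.ofReal θ * ENNReal.ofReal (-X ω)
            + ENNReal.ofReal (θ ^ 2 * C) * ENNReal.ofReal (Real.exp (θ₀ * |y|)) := by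
          rw [ENNReal.ofReal_add (by positivity) (by positivity),
            ENNReal.ofReal_add (by norm_num) (by positivity),
            ENNReal.ofReal_mul hθpos.le, ENNReal.ofReal_mul (by positivity)]
          simp only [ENNReal.ofReal_one]
          refine add_le_add (add_le_add le_rfl (mul_le_mul_right ?_ _)) le_rfl
          rw [aux_ofReal_max, ← aux_ofReal_max (-X ω)]
          apply ENNReal.ofReal_le_ofReal
          rcases le_total (X ω) (M : ℝ) with h | h
          · rw [show y = X ω from min_eq_left h]
            exact le_max_left _ _
          · rw [show y = (M : ℝ) from min_eq_right h]
            exact le_trans (neg_nonpos.mpr (Nat.cast_nonneg M)) (le_max_right _ _)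
  -- integrate
  have hmeas1 : Measurable fun ω => ENNReal.ofReal (Real.exp (-θ * X ω)) :=
    ((hX.const_mul (-θ)).exp).ennreal_ofReal
  have hmeasY : Measurable fun ω => ENNReal.ofReal (Y ω) := hYmeas.ennreal_ofReal
  have hmeasnX : Measurable fun ω => ENNReal.ofReal (-X ω) := hX.neg.ennreal_ofReal
  have hL : ∫⁻ ω, (ENNReal.ofReal (Real.exp (-θ * X ω))
        + ENNReal.ofReal θ * ENNReal.ofReal (Y ω)) ∂P
      = (∫⁻ ω, ENNReal.ofReal (Real.exp (-θ * X ω)) ∂P) + ENNReal.ofReal θ * A := by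
    rw [lintegral_add_left hmeas1, lintegral_const_mul _ hmeasY]
  have hR : ∫⁻ ω, (1 + ENNReal.ofReal θ * ENNReal.ofReal (-X ω)
        + ENNReal.ofReal (θ ^ 2 * C) * ENNReal.ofReal (Real.exp (θ₀ * |Y ω|))) ∂P
      = 1 + ENNReal.ofReal θ * B + ENNReal.ofReal (θ ^ 2 * C) * E := by
    rw [lintegral_add_left (f := fun ω => (1 : ℝ≥0∞) + ENNReal.ofReal θ * ENNReal.ofReal (-X ω))
        (measurable_const.add (hmeasnX.const_mul _)),
      lintegral_add_left measurable_const, lintegral_const,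
      lintegral_const_mul _ hmeasnX, lintegral_const_mul _ hEmeas]
    simp
    rfl
  have hint : (∫⁻ ω, ENNReal.ofReal (Real.exp (-θ * X ω)) ∂P) + ENNReal.ofReal θ * A
      ≤ 1 + ENNReal.ofReal θ * B + ENNReal.ofReal (θ ^ 2 * C) * E := by
    rw [← hL, ← hR]
    exact lintegral_mono hmaster
  have hkey : B + ENNReal.ofReal (θ * C) * E < A := by
    have hfin2 : ENNReal.ofReal (θ * C) * E ≠ ⊤ :=
      ENNReal.mul_ne_top ENNReal.ofReal_ne_top hEfin
    rw [← ENNReal.toReal_lt_toReal (ENNReal.add_ne_top.mpr ⟨hBfin, hfin2⟩) hAfin,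
      ENNReal.toReal_add hBfin hfin2, ENNReal.toReal_mul,
      ENNReal.toReal_ofReal (by positivity)]
    have : θ * C * Et < dr := hθsmall
    simp only [hdrdef, hEtdef] at this ⊢
    linarith
  have hfinal : (∫⁻ ω, ENNReal.ofReal (Real.exp (-θ * X ω)) ∂P) + ENNReal.ofReal θ * A
      < 1 + ENNReal.ofReal θ * A := by
    calc (∫⁻ ω, ENNReal.ofReal (Real.exp (-θ * X ω)) ∂P) + ENNReal.ofReal θ * A
        ≤ 1 + ENNReal.ofReal θ * B + ENNReal.ofReal (θ ^ 2 * C) * E := hint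
      _ = 1 + ENNReal.ofReal θ * (B + ENNReal.ofReal (θ * C) * E) := by
          rw [show θ ^ 2 * C = θ * (θ * C) by ring, ENNReal.ofReal_mul hθpos.le,
            mul_add, add_assoc, mul_assoc]
      _ < 1 + ENNReal.ofReal θ * A := by
          apply ENNReal.add_lt_add_left (by norm_num)
          exact (ENNReal.mul_lt_mul_iff_right (by simp [ENNReal.ofReal_pos, hθpos])
            ENNReal.ofReal_ne_top).mpr hkey
  exact (ENNReal.add_lt_add_iff_right
    (ENNReal.mul_ne_top ENNReal.ofReal_ne_top hAfin)).mp hfinal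


private lemma aux_bdd {Ω : Type*} [MeasurableSpace Ω] (P : Measure Ω)
    [IsProbabilityMeasure P] (X : Ω → ℝ) (hX : Measurable X)
    (hXneg : 0 < P {ω | X ω < 0}) :
    ∃ b : ℝ, ∀ θ : ℝ, 0 < θ →
      ∫⁻ ω, ENNReal.ofReal (Real.exp (-θ * X ω)) ∂P < 1 → θ ≤ b := by
  -- find δ > 0 with P {X ≤ -δ} > 0
  obtain ⟨n, hn⟩ : ∃ n : ℕ, 0 < P {ω | X ω ≤ -(1 / (n + 1))} := by
    by_contra hc
    push_neg at hc
    have hsub : {ω | X ω < 0} ⊆ ⋃ n : ℕ, {ω | X ω ≤ -(1 / ((n : ℝ) + 1))} := by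
      intro ω hω
      simp only [mem_setOf_eq] at hω
      obtain ⟨n, hn⟩ := exists_nat_gt (1 / (-X ω))
      refine mem_iUnion.mpr ⟨n, ?_⟩
      simp only [mem_setOf_eq]
      have hx : (0:ℝ) < -X ω := by linarith
      have h1 : 1 / (-X ω) < (n : ℝ) + 1 := by
        have : (n : ℝ) ≤ n + 1 := by linarith
        linarith
      have h2 : 1 / ((n : ℝ) + 1) < -X ω := by
        rw [div_lt_iff₀ (by positivity)]
        rw [div_lt_iff₀ hx] at h1
        linarith
      linarith
    have : P {ω | X ω < 0} = 0 := by
      refine le_antisymm ?_ zero_le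
      calc P {ω | X ω < 0} ≤ P (⋃ n : ℕ, {ω | X ω ≤ -(1 / ((n : ℝ) + 1))}) :=
            measure_mono hsub
        _ = 0 := measure_iUnion_null fun n => le_antisymm (hc n) zero_le
    exact absurd this hXneg.ne'
  set δ : ℝ := 1 / ((n : ℝ) + 1) with hδdef
  have hδ : 0 < δ := by positivity
  set s : Set Ω := {ω | X ω ≤ -δ} with hsdef
  have hs : MeasurableSet s := hX measurableSet_Iic
  set p : ℝ≥0∞ := P s with hpdef
  have hp0 : p ≠ 0 := hn.ne'
  have hpfin : p ≠ ⊤ := (measure_lt_top P s).ne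
  set r : ℝ := (p⁻¹).toReal with hrdef
  refine ⟨Real.log r / δ, fun θ hθ hlt => ?_⟩
  have h1 : ENNReal.ofReal (Real.exp (θ * δ)) * p
      ≤ ∫⁻ ω, ENNReal.ofReal (Real.exp (-θ * X ω)) ∂P := by
    calc ENNReal.ofReal (Real.exp (θ * δ)) * p
        = ∫⁻ _ω in s, ENNReal.ofReal (Real.exp (θ * δ)) ∂P := by
          rw [setLIntegral_const]
      _ ≤ ∫⁻ ω in s, ENNReal.ofReal (Real.exp (-θ * X ω)) ∂P := by
          apply setLIntegral_mono ((hX.const_mul (-θ)).exp).ennreal_ofReal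
          intro ω hω
          apply ENNReal.ofReal_le_ofReal
          apply Real.exp_le_exp.mpr
          have : X ω ≤ -δ := hω
          nlinarith
      _ ≤ ∫⁻ ω, ENNReal.ofReal (Real.exp (-θ * X ω)) ∂P :=
          setLIntegral_le_lintegral _ _
  have h2 : ENNReal.ofReal (Real.exp (θ * δ)) * p < 1 := h1.trans_lt hlt
  have h3 : ENNReal.ofReal (Real.exp (θ * δ)) < p⁻¹ := by
    by_contra hc
    push_neg at hc
    have := mul_le_mul_left hc p
    rw [ENNReal.inv_mul_cancel hp0 hpfin] at this
    exact absurd (this.trans_lt h2) (lt_irrefl 1)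
  have h4 : Real.exp (θ * δ) < r := by
    rw [hrdef]
    exact (ENNReal.ofReal_lt_iff_lt_toReal (Real.exp_pos _).le
      (ENNReal.inv_ne_top.mpr hp0)).mp h3
  have hr0 : 0 < r := (Real.exp_pos _).trans h4
  have h5 : θ * δ < Real.log r := (Real.lt_log_iff_exp_lt hr0).mpr h4
  calc θ = θ * δ / δ := by field_simp
    _ ≤ Real.log r / δ := by gcongr


/-- Under the standing assumptions (`E X ∈ (0,∞]`, `P(X<0) > 0`, `g(θ₀) < ∞` for some
`θ₀ > 0`), the set `{θ > 0 : g(θ) < 1}` is nonempty and bounded above, its supremum `κ`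
satisfies `0 < κ < ∞`, and `ρ = g(κ)` satisfies `0 < ρ ≤ 1`; moreover if `g` is finite
everywhere on `(0,∞)` then `ρ = 1`. -/
theorem kappa_pos_finite_and_rho
    {Ω : Type*} [MeasurableSpace Ω] (P : Measure Ω) [IsProbabilityMeasure P]
    (X : Ω → ℝ) (hX : Measurable X)
    (g : ℝ → ℝ≥0∞) (hg : ∀ θ, g θ = ∫⁻ ω, ENNReal.ofReal (Real.exp (-θ * X ω)) ∂P)
    -- `E X ∈ (0, ∞]`
    (hneg : ∫⁻ ω, ENNReal.ofReal (-X ω) ∂P < ⊤)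
    (hmean : ∫⁻ ω, ENNReal.ofReal (-X ω) ∂P < ∫⁻ ω, ENNReal.ofReal (X ω) ∂P)
    (hXneg : 0 < P {ω | X ω < 0})
    (hθ : ∃ θ₀ > 0, g θ₀ < ⊤) :
    ({θ : ℝ | 0 < θ ∧ g θ < 1}).Nonempty ∧
    BddAbove {θ : ℝ | 0 < θ ∧ g θ < 1} ∧
    0 < sSup {θ : ℝ | 0 < θ ∧ g θ < 1} ∧
    0 < g (sSup {θ : ℝ | 0 < θ ∧ g θ < 1}) ∧
    g (sSup {θ : ℝ | 0 < θ ∧ g θ < 1}) ≤ 1 ∧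
    ((∀ θ > 0, g θ < ⊤) → g (sSup {θ : ℝ | 0 < θ ∧ g θ < 1}) = 1) := by
  obtain ⟨θ₀, hθ₀pos, hθ₀fin⟩ := hθ
  rw [hg] at hθ₀fin
  set S : Set ℝ := {θ : ℝ | 0 < θ ∧ g θ < 1} with hSdef
  -- nonempty
  obtain ⟨θ₁, hθ₁pos, hθ₁lt⟩ := aux_nonempty P X hX hneg hmean hθ₀pos hθ₀fin
  have hne : S.Nonempty := ⟨θ₁, hθ₁pos, by rw [hg]; exact hθ₁lt⟩
  -- bounded above
  obtain ⟨b, hb⟩ := aux_bdd P X hX hXneg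
  have hbdd : BddAbove S := ⟨b, fun θ hθS => hb θ hθS.1 (by rw [← hg]; exact hθS.2)⟩
  set κ : ℝ := sSup S with hκdef
  have hκpos : 0 < κ := hθ₁pos.trans_le (le_csSup hbdd ⟨hθ₁pos, by rw [hg]; exact hθ₁lt⟩)
  -- g κ ≤ 1 via Fatou
  have hgκle : g κ ≤ 1 := by
    obtain ⟨u, humono, hutend, humem⟩ := exists_seq_tendsto_sSup hne hbdd
    have hpt : ∀ ω, (fun n => ENNReal.ofReal (Real.exp (-u n * X ω))) =ᶠ[atTop] _ := fun _ => .rfl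
    have hliminf : ∀ ω, ENNReal.ofReal (Real.exp (-κ * X ω))
        = Filter.liminf (fun n => ENNReal.ofReal (Real.exp (-u n * X ω))) atTop := by
      intro ω
      have h1 : Filter.Tendsto (fun n => -u n * X ω) atTop (nhds (-κ * X ω)) :=
        (hutend.neg).mul_const _
      have h2 : Filter.Tendsto (fun n => ENNReal.ofReal (Real.exp (-u n * X ω))) atTop
          (nhds (ENNReal.ofReal (Real.exp (-κ * X ω)))) :=
        (ENNReal.continuous_ofReal.tendsto _).comp ((Real.continuous_exp.tendsto _).comp h1)
      exact (h2.liminf_eq).symm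
    calc g κ = ∫⁻ ω, Filter.liminf (fun n => ENNReal.ofReal (Real.exp (-u n * X ω))) atTop ∂P := by
          rw [hg]
          congr 1; funext ω; exact hliminf ω
      _ ≤ Filter.liminf (fun n => ∫⁻ ω, ENNReal.ofReal (Real.exp (-u n * X ω)) ∂P) atTop :=
          lintegral_liminf_le fun n => ((hX.const_mul (-u n)).exp).ennreal_ofReal
      _ ≤ 1 := by
          have h3 : ∀ n, (∫⁻ ω, ENNReal.ofReal (Real.exp (-u n * X ω)) ∂P) ≤ 1 := by
            intro n
            rw [← hg]
            exact (humem n).2.le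
          calc Filter.liminf (fun n => ∫⁻ ω, ENNReal.ofReal (Real.exp (-u n * X ω)) ∂P) atTop
              ≤ Filter.liminf (fun _ : ℕ => (1 : ℝ≥0∞)) atTop :=
                Filter.liminf_le_liminf (Filter.Eventually.of_forall h3)
            _ = 1 := Filter.liminf_const _
  -- g κ > 0
  have hgκpos : 0 < g κ := by
    rw [hg]
    rw [lintegral_pos_iff_support ((hX.const_mul (-κ)).exp).ennreal_ofReal]
    have hsupp : Function.support (fun ω => ENNReal.ofReal (Real.exp (-κ * X ω))) = univ :=
      eq_univ_of_forall fun ω => (ENNReal.ofReal_pos.mpr (Real.exp_pos _)).ne'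
    rw [hsupp]
    simp
  refine ⟨hne, hbdd, hκpos, hgκpos, hgκle, ?_⟩
  -- finiteness everywhere ⇒ g κ = 1
  intro hfinall
  by_contra hne1
  have hlt1 : g κ < 1 := lt_of_le_of_ne hgκle hne1
  have hκ1fin : g (κ + 1) ≠ ⊤ := (hfinall _ (by linarith)).ne
  set F : ℝ≥0∞ := g (κ + 1) with hFdef
  set w : ℝ := (1 - g κ).toReal with hwdef
  have hw : 0 < w := by
    apply ENNReal.toReal_pos
    · exact (tsub_pos_iff_lt.mpr hlt1).ne'
    · exact (lt_of_le_of_lt tsub_le_self ENNReal.one_lt_top).ne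
  set t : ℝ := min (1/2) (w / (2 * (F.toReal + 1))) with htdef
  have hFt : 0 ≤ F.toReal := ENNReal.toReal_nonneg
  have ht0 : 0 < t := lt_min (by norm_num) (by positivity)
  have ht1 : t < 1 := (min_le_left _ _).trans_lt (by norm_num)
  have htF : t * F.toReal < w := by
    have h1 : t ≤ w / (2 * (F.toReal + 1)) := min_le_right _ _
    have h2 : t * (2 * (F.toReal + 1)) ≤ w := (le_div_iff₀ (by positivity)).mp h1
    nlinarith
  -- convexity bound: g (κ + t) ≤ (1-t) g κ + t F
  have hconv : g (κ + t) ≤ ENNReal.ofReal (1 - t) * g κ + ENNReal.ofReal t * F := by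
    have hpt : ∀ ω, ENNReal.ofReal (Real.exp (-(κ + t) * X ω))
        ≤ ENNReal.ofReal (1 - t) * ENNReal.ofReal (Real.exp (-κ * X ω))
          + ENNReal.ofReal t * ENNReal.ofReal (Real.exp (-(κ + 1) * X ω)) := by
      intro ω
      have hcx := convexOn_exp.2 (mem_univ (-κ * X ω)) (mem_univ (-(κ + 1) * X ω))
        (by linarith : (0:ℝ) ≤ 1 - t) ht0.le (by ring)
      simp only [smul_eq_mul] at hcx
      have heq : (1 - t) * (-κ * X ω) + t * (-(κ + 1) * X ω) = -(κ + t) * X ω := by ring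
      rw [heq] at hcx
      calc ENNReal.ofReal (Real.exp (-(κ + t) * X ω))
          ≤ ENNReal.ofReal ((1 - t) * Real.exp (-κ * X ω) + t * Real.exp (-(κ + 1) * X ω)) :=
            ENNReal.ofReal_le_ofReal hcx
        _ = _ := by
            rw [ENNReal.ofReal_add (mul_nonneg (by linarith) (Real.exp_pos _).le)
                (mul_nonneg ht0.le (Real.exp_pos _).le),
              ENNReal.ofReal_mul (by linarith), ENNReal.ofReal_mul ht0.le]
    calc g (κ + t) = ∫⁻ ω, ENNReal.ofReal (Real.exp (-(κ + t) * X ω)) ∂P := hg _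
      _ ≤ ∫⁻ ω, (ENNReal.ofReal (1 - t) * ENNReal.ofReal (Real.exp (-κ * X ω))
            + ENNReal.ofReal t * ENNReal.ofReal (Real.exp (-(κ + 1) * X ω))) ∂P :=
          lintegral_mono hpt
      _ = ENNReal.ofReal (1 - t) * g κ + ENNReal.ofReal t * F := by
          rw [lintegral_add_left
              ((((hX.const_mul (-κ)).exp).ennreal_ofReal).const_mul _),
            lintegral_const_mul _ (((hX.const_mul (-κ)).exp).ennreal_ofReal),
            lintegral_const_mul _ (((hX.const_mul (-(κ+1))).exp).ennreal_ofReal),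
            hFdef, hg (κ + 1), hg κ]
  have hlt : g (κ + t) < 1 := by
    calc g (κ + t) ≤ ENNReal.ofReal (1 - t) * g κ + ENNReal.ofReal t * F := hconv
      _ ≤ g κ + ENNReal.ofReal t * F := by
          apply add_le_add _ le_rfl
          calc ENNReal.ofReal (1 - t) * g κ ≤ 1 * g κ :=
              mul_le_mul_left (ENNReal.ofReal_le_one.mpr (by linarith)) _
            _ = g κ := one_mul _
      _ < 1 := by
          have hFr : ENNReal.ofReal t * F = ENNReal.ofReal (t * F.toReal) := by
            rw [ENNReal.ofReal_mul ht0.le, ENNReal.ofReal_toReal hκ1fin]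
          rw [hFr]
          calc g κ + ENNReal.ofReal (t * F.toReal) < g κ + ENNReal.ofReal w := by
                apply ENNReal.add_lt_add_left (hlt1.trans ENNReal.one_lt_top).ne
                exact ENNReal.ofReal_lt_ofReal_iff_of_nonneg (by positivity) |>.mpr htF
            _ = g κ + (1 - g κ) := by
                rw [hwdef, ENNReal.ofReal_toReal
                  (lt_of_le_of_lt tsub_le_self ENNReal.one_lt_top).ne]
            _ = 1 := add_tsub_cancel_of_le hlt1.le
  have : κ + t ≤ κ := le_csSup hbdd ⟨by linarith, hlt⟩
  linarith

end
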